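/- For every complex number z = x + i·y with x > 1 and y ≠ 0, the correction term r_N(z) = (N+1)^{-z}/(1−z) · (1 − x − y/tan(y·ln((N+2)/(N+1)))) tends to 0 as N → ∞, and consequently the radial-convergence sequence c_N(z) = (∑_{n=1}^{N} n^{-z}) + r_N(z) converges to the sum of the Riemann series ∑_{n=1}^{∞} n^{-z}. -/

import Mathlib

open Filter

/-- The `N`-th partial sum of the Riemann series: `ζ_N(z) = ∑_{n=1}^{N} n^{-z}`. -/
noncomputable def zetaPartial (z : ℂ) (N : ℕ) : ℂ :=
  ∑ n ∈ Finset.Icc 1 N, (n : ℂ) ^ (-z)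

/-- The correction term
`r_N(z) = (N+1)^{-z}/(1−z) · (1 − x − y/tan(y·ln((N+2)/(N+1))))` where `x = Re z`, `y = Im z`. -/
noncomputable def radialCorrection (z : ℂ) (N : ℕ) : ℂ :=
  ((N : ℂ) + 1) ^ (-z) / (1 - z) *
    ((1 - z.re - z.im / Real.tan (z.im * Real.log (((N : ℝ) + 2) / ((N : ℝ) + 1))) : ℝ) : ℂ)

/-- The radial-convergence sequence `c_N(z) = ζ_N(z) + r_N(z)`. -/
noncomputable def radialSeq (z : ℂ) (N : ℕ) : ℂ :=
  zetaPartial z N + radialCorrection z N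


section Aux

/-- `log((N+2)/(N+1))` is positive. -/
lemma auxL_pos (N : ℕ) : 0 < Real.log (((N : ℝ) + 2) / ((N : ℝ) + 1)) := by
  apply Real.log_pos
  rw [lt_div_iff₀ (by positivity)]
  linarith

/-- `1/(N+2) ≤ log((N+2)/(N+1))`. -/
lemma auxL_lb (N : ℕ) : ((N : ℝ) + 2)⁻¹ ≤ Real.log (((N : ℝ) + 2) / ((N : ℝ) + 1)) := by
  have h := Real.one_sub_inv_le_log_of_pos (x := ((N : ℝ) + 2) / ((N : ℝ) + 1)) (by positivity)
  have h2 : (((N : ℝ) + 2) / ((N : ℝ) + 1))⁻¹ = ((N : ℝ) + 1) / ((N : ℝ) + 2) := by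
    rw [inv_div]
  rw [h2] at h
  have : 1 - ((N : ℝ) + 1) / ((N : ℝ) + 2) = ((N : ℝ) + 2)⁻¹ := by
    field_simp
    ring
  linarith [this ▸ h]

/-- `log((N+2)/(N+1)) → 0`. -/
lemma auxL_tendsto : Tendsto (fun N : ℕ => Real.log (((N : ℝ) + 2) / ((N : ℝ) + 1)))
    atTop (nhds 0) := by
  have h1 : Tendsto (fun N : ℕ => ((N : ℝ) + 2) / ((N : ℝ) + 1)) atTop (nhds 1) := by
    have : ∀ N : ℕ, ((N : ℝ) + 2) / ((N : ℝ) + 1) = 1 + ((N : ℝ) + 1)⁻¹ := by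
      intro N; field_simp; ring
    simp_rw [this]
    have h2 : Tendsto (fun N : ℕ => ((N : ℝ) + 1)⁻¹) atTop (nhds 0) :=
      tendsto_inv_atTop_zero.comp
        (tendsto_atTop_add_const_right atTop 1 tendsto_natCast_atTop_atTop)
    simpa using tendsto_const_nhds.add h2
  have := (Real.continuousAt_log (by norm_num : (1:ℝ) ≠ 0)).tendsto.comp h1
  simpa [Function.comp_def] using this

end Aux

theorem radialCorrection_tendsto_zero (z : ℂ)
    (hx : 1 < z.re) (hy : z.im ≠ 0) :
    Tendsto (fun N : ℕ => (((N : ℂ) + 1) ^ (-z) / (1 - z) *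
      ((1 - z.re - z.im / Real.tan (z.im * Real.log (((N : ℝ) + 2) / ((N : ℝ) + 1))) : ℝ) : ℂ)))
      atTop (nhds 0) := by
  set x := z.re
  set y := z.im
  have hz1 : (1 : ℂ) - z ≠ 0 := by
    intro h
    have : z.re = 1 := by
      have := congrArg Complex.re h
      simp at this; linarith [this]
    simp [x] at hx; linarith
  have hz1n : 0 < ‖(1 : ℂ) - z‖ := norm_pos_iff.mpr hz1
  set C : ℝ := (|1 - x| + 2) / ‖(1 : ℂ) - z‖ with hC
  -- eventual bound
  have hθ : Tendsto (fun N : ℕ => |y * Real.log (((N : ℝ) + 2) / ((N : ℝ) + 1))|)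
      atTop (nhds 0) := by
    have := (auxL_tendsto.const_mul y).abs
    simpa using this
  have hev : ∀ᶠ N : ℕ in atTop,
      |y * Real.log (((N : ℝ) + 2) / ((N : ℝ) + 1))| < Real.pi / 2 := by
    exact hθ.eventually_lt_const (by positivity)
  apply squeeze_zero_norm' (a := fun N : ℕ => C * ((N : ℝ) + 1) ^ (1 - x))
  · filter_upwards [hev] with N hN
    set L : ℝ := Real.log (((N : ℝ) + 2) / ((N : ℝ) + 1)) with hLdef
    have hL : 0 < L := auxL_pos N
    have hLlb : ((N : ℝ) + 2)⁻¹ ≤ L := auxL_lb N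
    set θ : ℝ := y * L with hθdef
    have hθne : θ ≠ 0 := mul_ne_zero hy hL.ne'
    have htan : |θ| ≤ |Real.tan θ| := by
      rcases lt_or_gt_of_ne hθne with h | h
      · have h1 : 0 < -θ := by linarith
        have h2 : -θ < Real.pi / 2 := by
          have := hN; rw [abs_of_neg h] at this; linarith
        have := Real.lt_tan h1 h2
        rw [Real.tan_neg] at this
        calc |θ| = -θ := abs_of_neg h
          _ ≤ -Real.tan θ := le_of_lt this
          _ ≤ |Real.tan θ| := (neg_le_abs _)
      · have h2 : θ < Real.pi / 2 := by
          have := hN; rw [abs_of_pos h] at this; linarith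
        have := Real.lt_tan h h2
        calc |θ| = θ := abs_of_pos h
          _ ≤ Real.tan θ := le_of_lt this
          _ ≤ |Real.tan θ| := le_abs_self _
    have htan0 : Real.tan θ ≠ 0 := by
      intro h0
      rw [h0] at htan
      simp at htan
      exact hθne htan
    -- |y / tan θ| ≤ 1 / L ≤ N + 2
    have hbd : |y / Real.tan θ| ≤ (N : ℝ) + 2 := by
      rw [abs_div]
      have h1 : |y| / |Real.tan θ| ≤ |y| / |θ| := by
        apply div_le_div_of_nonneg_left (abs_nonneg y) (abs_pos.mpr hθne) htan
      have h2 : |y| / |θ| = L⁻¹ := by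
        rw [hθdef, abs_mul, abs_of_pos hL]
        rw [div_mul_eq_div_div]
        rw [div_self (abs_ne_zero.mpr hy), one_div]
      have h3 : L⁻¹ ≤ (N : ℝ) + 2 := by
        rw [inv_le_comm₀ hL (by positivity)]
        exact hLlb
      linarith
    -- norm computation
    have hnorm : ‖((N : ℂ) + 1) ^ (-z)‖ = ((N : ℝ) + 1) ^ (-x) := by
      have hcast : ((N : ℂ) + 1) = (((N : ℝ) + 1 : ℝ) : ℂ) := by push_cast; ring
      rw [hcast, Complex.norm_cpow_eq_rpow_re_of_pos (by positivity)]
      simp [x]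
    rw [norm_mul, norm_div, hnorm, Complex.norm_real]
    have habs : |1 - x - y / Real.tan θ| ≤ |1 - x| + ((N : ℝ) + 2) := by
      calc |1 - x - y / Real.tan θ| ≤ |1 - x| + |y / Real.tan θ| := abs_sub _ _
        _ ≤ |1 - x| + ((N : ℝ) + 2) := by linarith
    have hpow : (0:ℝ) < ((N : ℝ) + 1) ^ (-x) := Real.rpow_pos_of_pos (by positivity) _
    calc ((N : ℝ) + 1) ^ (-x) / ‖(1:ℂ) - z‖ * |1 - x - y / Real.tan θ|
        ≤ ((N : ℝ) + 1) ^ (-x) / ‖(1:ℂ) - z‖ * ((|1 - x| + 2) * ((N : ℝ) + 1)) := by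
          apply mul_le_mul_of_nonneg_left _ (by positivity)
          have : (N : ℝ) + 2 ≤ 2 * ((N : ℝ) + 1) := by linarith
          nlinarith [abs_nonneg (1 - x), Nat.cast_nonneg (α := ℝ) N]
      _ = C * (((N : ℝ) + 1) ^ (-x) * ((N : ℝ) + 1)) := by rw [hC]; ring
      _ = C * ((N : ℝ) + 1) ^ (1 - x) := by
          congr 1
          rw [show (1 : ℝ) - x = -x + 1 by ring,
            Real.rpow_add_one (by positivity : ((N:ℝ)+1) ≠ 0)]
  · have h1 : Tendsto (fun N : ℕ => ((N : ℝ) + 1) ^ (1 - x)) atTop (nhds 0) := by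
      have h2 : Tendsto (fun N : ℕ => (N : ℝ) + 1) atTop atTop :=
        tendsto_atTop_add_const_right atTop 1 tendsto_natCast_atTop_atTop
      have h3 := (tendsto_rpow_neg_atTop (by linarith : (0:ℝ) < x - 1)).comp h2
      simpa [Function.comp_def, show -(x - 1) = 1 - x by ring] using h3
    simpa using h1.const_mul C

/-- For `z = x + i·y` with `x > 1` and `y ≠ 0`, the correction term `r_N(z)` tends to `0`,
and consequently the radial-convergence sequence `c_N(z)` converges to the sum of the
Riemann series `∑_{n=1}^{∞} n^{-z}`. -/
theorem radialCorrection_tendsto_zero_and_radialSeq_tendsto_tsum (z : ℂ)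
    (hx : 1 < z.re) (hy : z.im ≠ 0) :
    Tendsto (fun N : ℕ => radialCorrection z N) atTop (nhds 0) ∧
    Tendsto (fun N : ℕ => radialSeq z N) atTop
      (nhds (∑' n : ℕ, ((n : ℂ) + 1) ^ (-z))) := by
  have hr : Tendsto (fun N : ℕ => radialCorrection z N) atTop (nhds 0) := by
    simpa [radialCorrection] using radialCorrection_tendsto_zero z hx hy
  refine ⟨hr, ?_⟩
  have hsum : Summable (fun n : ℕ => ((n : ℂ) + 1) ^ (-z)) := by
    have h1 : Summable (fun n : ℕ => 1 / (n : ℂ) ^ z) :=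
      Complex.summable_one_div_nat_cpow.mpr hx
    have h2 := (summable_nat_add_iff 1).mpr h1
    refine h2.congr fun n => ?_
    push_cast
    rw [Complex.cpow_neg, one_div]
  have hζ : Tendsto (fun N : ℕ => zetaPartial z N) atTop
      (nhds (∑' n : ℕ, ((n : ℂ) + 1) ^ (-z))) := by
    refine hsum.hasSum.tendsto_sum_nat.congr fun N => ?_
    rw [zetaPartial, ← Finset.Ico_add_one_right_eq_Icc, Finset.sum_Ico_eq_sum_range]
    refine Finset.sum_congr (by norm_num) fun i _ => ?_
    push_cast
    ring_nf
  simpa [radialSeq] using hζ.add hr
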